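/- Let ν be a probability measure on ℝ, absolutely continuous with respect to Lebesgue measure, and let μ̃ = Σ_{i=0}^{m} p_i δ_{x_i} be a discrete probability measure on ℝ^d with all p_i > 0 and distinct points x_i. Then for every ε > 0 there exists a continuous piecewise linear function φ: ℝ → ℝ^d with at most 2m breakpoints such that W_p(μ̃, φ_#ν) ≤ ε, where W_p is the p-Wasserstein distance, 1 ≤ p < ∞. -/

import Mathlib

open MeasureTheory

/-- A continuous piecewise linear function `ℝ → ℝ^d` (Euclidean) with breakpoints in the
finite set `B`. -/
def IsCPwL {d : ℕ} (g : ℝ → EuclideanSpace ℝ (Fin d)) (B : Finset ℝ) : Prop :=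
  Continuous g ∧ ∀ a b : ℝ, a < b → (∀ c ∈ B, c ∉ Set.Ioo a b) →
    ∃ u v : EuclideanSpace ℝ (Fin d), ∀ t ∈ Set.Icc a b, g t = t • u + v

open Set Filter ProbabilityTheory

noncomputable def rampAux (a b t : ℝ) : ℝ := max 0 (min 1 ((t - a) / (b - a)))

noncomputable def cAux (m : ℕ) (a' : ℕ → ℝ) (t : ℝ) : ℕ :=
  ((Finset.range m).filter (fun k => a' k < t)).card

noncomputable def phiAux {d : ℕ} (m : ℕ) (a' b' : ℕ → ℝ) (x' : ℕ → EuclideanSpace ℝ (Fin d))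
    (t : ℝ) : EuclideanSpace ℝ (Fin d) :=
  x' 0 + ∑ k ∈ Finset.range m, rampAux (a' k) (b' k) t • (x' (k+1) - x' k)

lemma rampAux_nonneg (a b t : ℝ) : 0 ≤ rampAux a b t := le_max_left _ _

lemma rampAux_le_one (a b t : ℝ) : rampAux a b t ≤ 1 :=
  max_le zero_le_one (min_le_left _ _)

lemma rampAux_of_le (a b t : ℝ) (hab : a < b) (ht : t ≤ a) : rampAux a b t = 0 := by
  have h1 : (t - a) / (b - a) ≤ 0 :=
    div_nonpos_of_nonpos_of_nonneg (by linarith) (by linarith)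
  rw [rampAux, min_eq_right (by linarith), max_eq_left h1]

lemma rampAux_of_ge (a b t : ℝ) (hab : a < b) (ht : b ≤ t) : rampAux a b t = 1 := by
  have h1 : (1 : ℝ) ≤ (t - a) / (b - a) := by
    rw [le_div_iff₀ (by linarith)]; linarith
  rw [rampAux, min_eq_left h1, max_eq_right zero_le_one]

lemma rampAux_of_mem (a b t : ℝ) (hab : a < b) (h1 : a ≤ t) (h2 : t ≤ b) :
    rampAux a b t = (t - a) / (b - a) := by
  have hd : 0 < b - a := by linarith
  have hn : 0 ≤ (t - a) / (b - a) := div_nonneg (by linarith) hd.le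
  have hl : (t - a) / (b - a) ≤ 1 := by rw [div_le_one hd]; linarith
  rw [rampAux, min_eq_right hl, max_eq_right hn]

lemma rampAux_continuous (a b : ℝ) : Continuous (rampAux a b) :=
  continuous_const.max (continuous_const.min ((continuous_id.sub continuous_const).div_const _))

lemma cAux_le (m : ℕ) (a' : ℕ → ℝ) (t : ℝ) : cAux m a' t ≤ m :=
  (Finset.card_filter_le _ _).trans_eq (Finset.card_range m)

lemma cAux_measurable (m : ℕ) (a' : ℕ → ℝ) : Measurable (cAux m a') := by
  unfold cAux
  simp only [Finset.card_filter]
  exact Finset.measurable_sum _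
    (fun k _ => Measurable.ite measurableSet_Ioi measurable_const measurable_const)

lemma phiAux_continuous {d : ℕ} (m : ℕ) (a' b' : ℕ → ℝ) (x' : ℕ → EuclideanSpace ℝ (Fin d)) :
    Continuous (phiAux m a' b' x') := by
  apply continuous_const.add
  exact continuous_finset_sum _ (fun k _ => (rampAux_continuous _ _).smul continuous_const)

lemma cAux_key (m : ℕ) (a' : ℕ → ℝ)
    (hmono : ∀ j k, j ≤ k → k < m → a' j ≤ a' k) (t : ℝ) (k : ℕ) (hk : k < m) :
    a' k < t ↔ k < cAux m a' t := by
  unfold cAux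
  constructor
  · intro h
    have hsub : Finset.range (k+1) ⊆ (Finset.range m).filter (fun j => a' j < t) := by
      intro j hj
      rw [Finset.mem_range] at hj
      rw [Finset.mem_filter, Finset.mem_range]
      exact ⟨by omega, lt_of_le_of_lt (hmono j k (by omega) hk) h⟩
    have := Finset.card_le_card hsub
    rw [Finset.card_range] at this
    omega
  · intro h
    by_contra hle
    push_neg at hle
    have hsub : (Finset.range m).filter (fun j => a' j < t) ⊆ Finset.range k := by
      intro j hj
      rw [Finset.mem_filter, Finset.mem_range] at hj
      rw [Finset.mem_range]
      by_contra hjk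
      push_neg at hjk
      exact absurd hj.2 (not_lt.2 (hle.trans (hmono k j hjk hj.1)))
    have := Finset.card_le_card hsub
    rw [Finset.card_range] at this
    omega

lemma tele_sum {d : ℕ} (m j : ℕ) (hj : j ≤ m) (x' : ℕ → EuclideanSpace ℝ (Fin d)) :
    x' 0 + ∑ k ∈ Finset.range m, (if k < j then (1:ℝ) else 0) • (x' (k+1) - x' k) = x' j := by
  have h1 : ∑ k ∈ Finset.range m, (if k < j then (1:ℝ) else 0) • (x' (k+1) - x' k)
      = ∑ k ∈ Finset.range j, (x' (k+1) - x' k) := by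
    have hf : (Finset.range m).filter (fun k => k < j) = Finset.range j := by
      ext k; simp only [Finset.mem_filter, Finset.mem_range]; omega
    have hA : ∑ k ∈ Finset.range j, (if k < j then (1:ℝ) else 0) • (x' (k+1) - x' k)
        = ∑ k ∈ Finset.range j, (x' (k+1) - x' k) :=
      Finset.sum_congr rfl (fun k hk => by rw [if_pos (Finset.mem_range.1 hk), one_smul])
    have hB : ∑ k ∈ (Finset.range m).filter (fun k => ¬ k < j),
        (if k < j then (1:ℝ) else 0) • (x' (k+1) - x' k) = 0 :=
      Finset.sum_eq_zero (fun k hk => by rw [if_neg (Finset.mem_filter.1 hk).2, zero_smul])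
    rw [← Finset.sum_filter_add_sum_filter_not (Finset.range m) (fun k => k < j), hf, hA, hB,
      add_zero]
  rw [h1, Finset.sum_range_sub]
  abel

lemma dist_sum_le {d : ℕ} (m : ℕ) (x' : ℕ → EuclideanSpace ℝ (Fin d)) (f g : ℕ → ℝ)
    (hf0 : ∀ k, 0 ≤ f k) (hf1 : ∀ k, f k ≤ 1) (hg0 : ∀ k, 0 ≤ g k) (hg1 : ∀ k, g k ≤ 1) :
    dist (x' 0 + ∑ k ∈ Finset.range m, f k • (x' (k+1) - x' k))
      (x' 0 + ∑ k ∈ Finset.range m, g k • (x' (k+1) - x' k))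
      ≤ ∑ k ∈ Finset.range m, ‖x' (k+1) - x' k‖ := by
  rw [dist_eq_norm]
  have h1 : x' 0 + ∑ k ∈ Finset.range m, f k • (x' (k+1) - x' k)
      - (x' 0 + ∑ k ∈ Finset.range m, g k • (x' (k+1) - x' k))
      = ∑ k ∈ Finset.range m, (f k - g k) • (x' (k+1) - x' k) := by
    rw [Finset.sum_congr rfl (fun k _ => sub_smul (f k) (g k) (x' (k+1) - x' k)),
      Finset.sum_sub_distrib]
    abel
  rw [h1]
  refine (norm_sum_le _ _).trans (Finset.sum_le_sum (fun k _ => ?_))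
  rw [norm_smul, Real.norm_eq_abs]
  have : |f k - g k| ≤ 1 := by
    rw [abs_le]; constructor <;> [linarith [hf0 k, hg1 k]; linarith [hf1 k, hg0 k]]
  calc |f k - g k| * ‖x' (k+1) - x' k‖ ≤ 1 * ‖x' (k+1) - x' k‖ :=
        mul_le_mul_of_nonneg_right this (norm_nonneg _)
    _ = ‖x' (k+1) - x' k‖ := one_mul _

lemma cdf_cont (ν : Measure ℝ) [IsProbabilityMeasure ν] (hν : ν ≪ volume) :
    Continuous (cdf ν) := by
  rw [continuous_iff_continuousAt]
  intro a
  rw [(monotone_cdf ν).continuousAt_iff_leftLim_eq_rightLim, (cdf ν).rightLim_eq]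
  have h0 : ν {a} = 0 := hν (Real.volume_singleton)
  have h1 := (cdf ν).measure_singleton a
  rw [measure_cdf, h0] at h1
  have h2 : Function.leftLim (cdf ν) a ≤ cdf ν a := (monotone_cdf ν).leftLim_le le_rfl
  have h3 : cdf ν a - Function.leftLim (cdf ν) a ≤ 0 := by
    by_contra h
    push_neg at h
    rw [eq_comm, ENNReal.ofReal_eq_zero] at h1
    linarith
  linarith

lemma exists_quantile (ν : Measure ℝ) [IsProbabilityMeasure ν] (hν : ν ≪ volume)
    {c : ℝ} (h0 : 0 < c) (h1 : c < 1) : ∃ t, cdf ν t = c := by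
  obtain ⟨l, hl⟩ : ∃ l, cdf ν l < c := ((tendsto_cdf_atBot ν).eventually_lt_const h0).exists
  obtain ⟨r, hr⟩ : ∃ r, c < cdf ν r := ((tendsto_cdf_atTop ν).eventually_const_lt h1).exists
  have hlr : l ≤ r := by
    by_contra h
    push_neg at h
    exact absurd (monotone_cdf ν h.le) (by linarith)
  obtain ⟨t, _, ht⟩ := intermediate_value_Icc hlr ((cdf_cont ν hν).continuousOn)
    ⟨hl.le, hr.le⟩
  exact ⟨t, ht⟩


/-- for any absolutely continuous ν on ℝ, any discrete measure
μ̃ = Σ_{i=0}^m p_i δ_{x_i} on ℝ^d with positive weights and distinct atoms, and any ε > 0,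
there is a continuous piecewise linear φ with at most 2m breakpoints such that
W_p(μ̃, φ_#ν) ≤ ε; we express this by exhibiting a coupling γ of μ̃ and φ_#ν with
p-th transport cost at most ε^p. -/
theorem exists_cpwl_pushforward_wasserstein_close
    {d m : ℕ} (ν : Measure ℝ) [IsProbabilityMeasure ν] (hν : ν ≪ volume)
    (p : Fin (m + 1) → ℝ) (hp : ∀ i, 0 < p i) (hsum : ∑ i, p i = 1)
    (x : Fin (m + 1) → EuclideanSpace ℝ (Fin d)) (hx : Function.Injective x)
    (q : ℝ) (hq : 1 ≤ q) (ε : ℝ) (hε : 0 < ε) :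
    ∃ (φ : ℝ → EuclideanSpace ℝ (Fin d)) (B : Finset ℝ), B.card ≤ 2 * m ∧ IsCPwL φ B ∧
      ∃ γ : Measure (EuclideanSpace ℝ (Fin d) × EuclideanSpace ℝ (Fin d)),
        γ.map Prod.fst = ∑ i, ENNReal.ofReal (p i) • Measure.dirac (x i) ∧
        γ.map Prod.snd = ν.map φ ∧
        ∫ w, dist w.1 w.2 ^ q ∂γ ≤ ε ^ q := by
  classical
  have hq0 : (0:ℝ) < q := by linarith
  -- weights indexed by ℕ
  set p' : ℕ → ℝ := fun n => p ⟨min n m, Nat.lt_succ_of_le (min_le_right n m)⟩ with hp'def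
  have hp'pos : ∀ n, 0 < p' n := fun n => hp _
  have hp'val : ∀ i : Fin (m+1), p' i.val = p i := by
    intro i
    have h1 : min i.val m = i.val := min_eq_left (Nat.lt_succ_iff.mp i.isLt)
    simp only [hp'def]
    congr 1
    exact Fin.ext h1
  set T : ℕ → ℝ := fun k => ∑ j ∈ Finset.range (k+1), p' j with hTdef
  have hTsucc : ∀ k, T (k+1) = T k + p' (k+1) := fun k => Finset.sum_range_succ _ _
  have hTmono : StrictMono T :=
    strictMono_nat_of_lt_succ (fun n => by rw [hTsucc]; linarith [hp'pos (n+1)])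
  have hT0 : T 0 = p' 0 := by simp [hTdef]
  have hTpos : ∀ k, 0 < T k := fun k =>
    lt_of_lt_of_le (hT0 ▸ hp'pos 0) (hTmono.monotone (Nat.zero_le k))
  have hT1 : T m = 1 := by
    have h1 : ∑ i : Fin (m+1), p' i.val = ∑ j ∈ Finset.range (m+1), p' j :=
      Fin.sum_univ_eq_sum_range p' (m+1)
    have h2 : ∑ i : Fin (m+1), p' i.val = 1 := by
      rw [Finset.sum_congr rfl (fun i _ => hp'val i)]
      exact hsum
    rw [hTdef]
    simp only [← h1, h2]
  have hTm1 : ∀ k, k < m → T k + p' m ≤ 1 := by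
    intro k hk
    have hmem : m ∉ Finset.range (k+1) := by simp; omega
    have h1 : T k + p' m = ∑ j ∈ insert m (Finset.range (k+1)), p' j := by
      rw [Finset.sum_insert hmem]; ring
    rw [h1, ← hT1]
    apply Finset.sum_le_sum_of_subset_of_nonneg
    · intro j hj
      simp only [Finset.mem_insert, Finset.mem_range] at hj ⊢
      omega
    · exact fun j _ _ => (hp'pos j).le
  -- atoms indexed by ℕ
  set x' : ℕ → EuclideanSpace ℝ (Fin d) :=
    fun n => x ⟨min n m, Nat.lt_succ_of_le (min_le_right n m)⟩ with hx'def
  -- constants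
  set M : ℝ := 1 + ∑ k ∈ Finset.range m, ‖x' (k+1) - x' k‖ with hMdef
  have hM1 : 1 ≤ M := le_add_of_nonneg_right (Finset.sum_nonneg fun _ _ => norm_nonneg _)
  have hM0 : 0 < M := lt_of_lt_of_le one_pos hM1
  have hεq : 0 < ε ^ q := Real.rpow_pos_of_pos hε q
  have hMq : 0 < M ^ q := Real.rpow_pos_of_pos hM0 q
  have hden : 0 < (m:ℝ) * M ^ q + 1 := by positivity
  set η : ℝ := min (p' m / 2) (ε ^ q / ((m:ℝ) * M ^ q + 1)) with hηdef
  have hη0 : 0 < η := lt_min (by linarith [hp'pos m]) (div_pos hεq hden)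
  have hηpm : η < p' m := (min_le_left _ _).trans_lt (half_lt_self (hp'pos m))
  have hηe : η ≤ ε ^ q / ((m:ℝ) * M ^ q + 1) := min_le_right _ _
  -- quantiles
  have hcdf_mono := monotone_cdf ν
  have hex : ∀ k : ℕ, ∃ ab : ℝ × ℝ, k < m →
      (cdf ν ab.1 = T k ∧ cdf ν ab.2 = T k + η ∧ ab.1 < ab.2) := by
    intro k
    by_cases hk : k < m
    · have h1 : T k < 1 := by rw [← hT1]; exact hTmono hk
      have h2 : T k + η < 1 := by linarith [hTm1 k hk]
      obtain ⟨a, ha⟩ := exists_quantile ν hν (hTpos k) h1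
      obtain ⟨b, hb⟩ := exists_quantile ν hν (c := T k + η) (by linarith [hTpos k]) h2
      refine ⟨(a, b), fun _ => ⟨ha, hb, ?_⟩⟩
      by_contra habc
      push_neg at habc
      have := hcdf_mono habc
      rw [ha, hb] at this
      linarith
    · exact ⟨(0, 1), fun h => absurd h hk⟩
  choose ab hab using hex
  set a' : ℕ → ℝ := fun k => (ab k).1 with ha'def
  set b' : ℕ → ℝ := fun k => (ab k).2 with hb'def
  have hcdfa : ∀ k, k < m → cdf ν (a' k) = T k := fun k hk => (hab k hk).1
  have hcdfb : ∀ k, k < m → cdf ν (b' k) = T k + η := fun k hk => (hab k hk).2.1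
  have hab' : ∀ k, k < m → a' k < b' k := fun k hk => (hab k hk).2.2
  have ha'mono : ∀ j k, j ≤ k → k < m → a' j ≤ a' k := by
    intro j k hjk hk
    rcases eq_or_lt_of_le hjk with rfl | hlt
    · exact le_rfl
    · by_contra h
      push_neg at h
      have h1 := hcdf_mono h.le
      rw [hcdfa j (lt_trans hlt hk), hcdfa k hk] at h1
      have h2 := hTmono hlt
      linarith
  have hνIic : ∀ k, k < m → ν (Iic (a' k)) = ENNReal.ofReal (T k) := by
    intro k hk; rw [← ofReal_cdf ν (a' k), hcdfa k hk]
  have hνIicb : ∀ k, k < m → ν (Iic (b' k)) = ENNReal.ofReal (T k + η) := by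
    intro k hk; rw [← ofReal_cdf ν (b' k), hcdfb k hk]
  -- index function and maps
  set c : ℝ → ℕ := fun t => cAux m a' t with hcdef
  have hkey : ∀ t k, k < m → (a' k < t ↔ k < c t) := fun t k hk => cAux_key m a' ha'mono t k hk
  have hcm : ∀ t, c t ≤ m := fun t => cAux_le m a' t
  set ψ : ℝ → EuclideanSpace ℝ (Fin d) := fun t => x' (c t) with hψdef
  set φ : ℝ → EuclideanSpace ℝ (Fin d) := fun t => phiAux m a' b' x' t with hφdef
  have hx'm : Measurable x' := measurable_from_top
  have hc_meas : Measurable c := cAux_measurable m a'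
  have hψ_meas : Measurable ψ := hx'm.comp hc_meas
  have hφ_cont : Continuous φ := phiAux_continuous m a' b' x'
  have hφ_meas : Measurable φ := hφ_cont.measurable
  have hψ_sum : ∀ t, ψ t = x' 0 + ∑ k ∈ Finset.range m,
      (if k < c t then (1:ℝ) else 0) • (x' (k+1) - x' k) :=
    fun t => (tele_sum m (c t) (hcm t) x').symm
  have hφ_sum : ∀ t, φ t = x' 0 + ∑ k ∈ Finset.range m,
      rampAux (a' k) (b' k) t • (x' (k+1) - x' k) := fun t => rfl
  -- the measure of index level sets
  have hsle : ∀ k, k < m → {t | c t ≤ k} = Iic (a' k) := by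
    intro k hk
    ext t
    simp only [mem_setOf_eq, mem_Iic]
    constructor
    · intro h
      by_contra h2
      push_neg at h2
      have := (hkey t k hk).1 h2
      omega
    · intro h
      by_contra h2
      push_neg at h2
      have := (hkey t k hk).2 h2
      linarith
  have hνle : ∀ k, k ≤ m → ν {t | c t ≤ k} = ENNReal.ofReal (T k) := by
    intro k hk
    rcases lt_or_eq_of_le hk with h | rfl
    · rw [hsle k h, hνIic k h]
    · have huniv : {t | c t ≤ k} = univ := eq_univ_of_forall (fun t => hcm t)
      rw [huniv, measure_univ, hT1, ENNReal.ofReal_one]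
  have hR : ∀ i : Fin (m+1), ν {t | c t = i.val} = ENNReal.ofReal (p i) := by
    intro i
    by_cases h0 : i.val = 0
    · have heq : {t | c t = i.val} = {t | c t ≤ 0} := by
        ext t; simp only [mem_setOf_eq, h0]; omega
      rw [heq, hνle 0 (Nat.zero_le m)]
      congr 1
      calc T 0 = p' 0 := hT0
        _ = p' i.val := by rw [h0]
        _ = p i := hp'val i
    · obtain ⟨j, hj⟩ : ∃ j, i.val = j + 1 := ⟨i.val - 1, by omega⟩
      have hjm : j + 1 ≤ m := by have := i.isLt; omega
      have hsplit : {t | c t = i.val} = {t | c t ≤ j + 1} \ {t | c t ≤ j} := by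
        ext t; simp only [mem_setOf_eq, mem_diff, hj]; omega
      have hsub : {t | c t ≤ j} ⊆ {t | c t ≤ j + 1} := fun t ht => by
        simp only [mem_setOf_eq] at *; omega
      have hmeas2 : MeasurableSet {t | c t ≤ j} := by
        rw [hsle j (by omega)]; exact measurableSet_Iic
      rw [hsplit, measure_diff hsub hmeas2.nullMeasurableSet (measure_ne_top ν _),
        hνle (j+1) hjm, hνle j (by omega), ← ENNReal.ofReal_sub _ (hTpos j).le]
      congr 1
      calc T (j+1) - T j = p' (j+1) := by rw [hTsucc j]; ring
        _ = p' i.val := by rw [hj]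
        _ = p i := hp'val i
  -- the candidate objects
  refine ⟨φ, ((Finset.range m).image a') ∪ ((Finset.range m).image b'), ?_, ⟨hφ_cont, ?_⟩,
    ν.map (fun t => (ψ t, φ t)), ?_, ?_, ?_⟩
  · -- cardinality
    refine (Finset.card_union_le _ _).trans ?_
    have h1 := Finset.card_image_le (s := Finset.range m) (f := a')
    have h2 := Finset.card_image_le (s := Finset.range m) (f := b')
    rw [Finset.card_range] at h1 h2
    omega
  · -- piecewise linear
    intro a b hlt hB
    have hnoA : ∀ k, k < m → a' k ∉ Ioo a b := fun k hk =>
      hB (a' k) (Finset.mem_union_left _ (Finset.mem_image_of_mem a' (Finset.mem_range.2 hk)))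
    have hnoB : ∀ k, k < m → b' k ∉ Ioo a b := fun k hk =>
      hB (b' k) (Finset.mem_union_right _ (Finset.mem_image_of_mem b' (Finset.mem_range.2 hk)))
    have haff : ∀ k, ∃ αβ : ℝ × ℝ, k < m →
        ∀ t ∈ Icc a b, rampAux (a' k) (b' k) t = αβ.1 * t + αβ.2 := by
      intro k
      by_cases hk : k < m
      swap
      · exact ⟨(0, 0), fun h => absurd h hk⟩
      have hd := hab' k hk
      by_cases h1 : b ≤ a' k
      · refine ⟨(0, 0), fun _ t ht => ?_⟩
        rw [rampAux_of_le _ _ _ hd (le_trans ht.2 h1)]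
        ring
      · by_cases h2 : b' k ≤ a
        · refine ⟨(0, 1), fun _ t ht => ?_⟩
          rw [rampAux_of_ge _ _ _ hd (le_trans h2 ht.1)]
          ring
        · push_neg at h1 h2
          have hak : a' k ≤ a := by
            by_contra hc
            push_neg at hc
            exact hnoA k hk ⟨hc, h1⟩
          have hbk : b ≤ b' k := by
            by_contra hc
            push_neg at hc
            exact hnoB k hk ⟨h2, hc⟩
          refine ⟨(1 / (b' k - a' k), -(a' k) / (b' k - a' k)), fun _ t ht => ?_⟩
          rw [rampAux_of_mem _ _ _ hd (le_trans hak ht.1) (le_trans ht.2 hbk)]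
          field_simp
          ring
    choose αβ hαβ using haff
    refine ⟨∑ k ∈ Finset.range m, (αβ k).1 • (x' (k+1) - x' k),
      x' 0 + ∑ k ∈ Finset.range m, (αβ k).2 • (x' (k+1) - x' k), ?_⟩
    intro t ht
    have hs : ∀ k ∈ Finset.range m, rampAux (a' k) (b' k) t • (x' (k+1) - x' k)
        = t • ((αβ k).1 • (x' (k+1) - x' k)) + (αβ k).2 • (x' (k+1) - x' k) := by
      intro k hk
      rw [hαβ k (Finset.mem_range.1 hk) t ht, add_smul, mul_comm, ← smul_smul]
    rw [hφ_sum t, Finset.sum_congr rfl hs, Finset.sum_add_distrib, Finset.smul_sum]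
    abel
  · -- first marginal
    rw [Measure.map_map measurable_fst (hψ_meas.prodMk hφ_meas)]
    have hcomp : (Prod.fst ∘ fun t => (ψ t, φ t)) = ψ := rfl
    rw [hcomp]
    ext s hs
    rw [Measure.map_apply hψ_meas hs]
    have hRHS : (∑ i, ENNReal.ofReal (p i) • Measure.dirac (x i)) s
        = ∑ i ∈ Finset.univ.filter (fun i : Fin (m+1) => x i ∈ s), ENNReal.ofReal (p i) := by
      rw [Measure.finset_sum_apply]
      simp only [Measure.smul_apply, Measure.dirac_apply' _ hs, smul_eq_mul]
      rw [Finset.sum_filter]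
      apply Finset.sum_congr rfl
      intro i _
      by_cases hxi : x i ∈ s
      · rw [if_pos hxi, Set.indicator_of_mem hxi, Pi.one_apply, mul_one]
      · rw [if_neg hxi, Set.indicator_of_notMem hxi, mul_zero]
    rw [hRHS]
    have hpre : ψ ⁻¹' s
        = ⋃ i ∈ Finset.univ.filter (fun i : Fin (m+1) => x i ∈ s), {t | c t = i.val} := by
      ext t
      simp only [mem_preimage, mem_iUnion, Finset.mem_filter, Finset.mem_univ, true_and,
        mem_setOf_eq, exists_prop]
      constructor
      · intro h
        exact ⟨⟨min (c t) m, Nat.lt_succ_of_le (min_le_right _ _)⟩, h,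
          (min_eq_left (hcm t)).symm⟩
      · rintro ⟨i, hxi, hct⟩
        have hψt : ψ t = x i := by
          show x' (c t) = x i
          simp only [hx'def]
          exact congrArg x (Fin.ext (show min (c t) m = i.val by have h1 := hcm t; omega))
        rw [hψt]
        exact hxi
    have hmeasR : ∀ i : Fin (m+1), MeasurableSet {t | c t = i.val} := fun i => by
      have heq : {t | c t = i.val} = c ⁻¹' {i.val} := rfl
      rw [heq]
      exact hc_meas (measurableSet_singleton _)
    have hdisjR : (↑(Finset.univ.filter (fun i : Fin (m+1) => x i ∈ s)) : Set (Fin (m+1))).PairwiseDisjoint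
        (fun i : Fin (m+1) => {t | c t = i.val}) := by
      intro i _ j _ hij
      refine Set.disjoint_left.2 (fun {t} hti htj => hij ?_)
      simp only [mem_setOf_eq] at hti htj
      exact Fin.ext (hti ▸ htj)
    rw [hpre, measure_biUnion_finset hdisjR (fun i _ => hmeasR i)]
    exact Finset.sum_congr rfl (fun i _ => hR i)
  · -- second marginal
    rw [Measure.map_map measurable_snd (hψ_meas.prodMk hφ_meas)]
    rfl
  · -- transport cost
    have hf_cont : Continuous (fun w : EuclideanSpace ℝ (Fin d) × EuclideanSpace ℝ (Fin d) =>
        dist w.1 w.2 ^ q) :=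
      (continuous_fst.dist continuous_snd).rpow_const (fun _ => Or.inr (by linarith))
    rw [integral_map (hψ_meas.prodMk hφ_meas).aemeasurable hf_cont.aestronglyMeasurable]
    set U : Set ℝ := ⋃ k ∈ Finset.range m, Ioo (a' k) (b' k) with hUdef
    have hUm : MeasurableSet U := Finset.measurableSet_biUnion _ (fun k _ => measurableSet_Ioo)
    have hub : ∀ t, dist (ψ t) (φ t) ^ q ≤ U.indicator (fun _ => M ^ q) t := by
      intro t
      by_cases htU : t ∈ U
      · rw [Set.indicator_of_mem htU]
        apply Real.rpow_le_rpow dist_nonneg ?_ (by linarith)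
        rw [hψ_sum t, hφ_sum t]
        refine (dist_sum_le m x' _ _ (fun k => ?_) (fun k => ?_) (fun k => rampAux_nonneg _ _ _)
          (fun k => rampAux_le_one _ _ _)).trans ?_
        · split <;> norm_num
        · split <;> norm_num
        · rw [hMdef]; linarith
      · rw [Set.indicator_of_notMem htU]
        have hnotin : ∀ k, k < m → t ∉ Ioo (a' k) (b' k) := by
          intro k hk hmem
          exact htU (mem_biUnion (Finset.mem_range.2 hk) hmem)
        have heq : φ t = ψ t := by
          rw [hψ_sum t, hφ_sum t]
          congr 1
          apply Finset.sum_congr rfl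
          intro k hk
          have hk' := Finset.mem_range.1 hk
          by_cases hltc : k < c t
          · have h1 : a' k < t := (hkey t k hk').2 hltc
            have h2 : b' k ≤ t := by
              by_contra hc
              push_neg at hc
              exact hnotin k hk' ⟨h1, hc⟩
            rw [if_pos hltc, rampAux_of_ge _ _ _ (hab' k hk') h2]
          · have h1 : t ≤ a' k := by
              by_contra hc
              push_neg at hc
              exact hltc ((hkey t k hk').1 hc)
            rw [if_neg hltc, rampAux_of_le _ _ _ (hab' k hk') h1]
        rw [heq, dist_self, Real.zero_rpow (by linarith)]
    have hnn : ∀ t, 0 ≤ dist (ψ t) (φ t) ^ q := fun t => Real.rpow_nonneg dist_nonneg q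
    have hmeas_h : Measurable (fun t => dist (ψ t) (φ t) ^ q) :=
      (continuous_id.rpow_const (fun _ => Or.inr (by linarith))).measurable.comp
        (hψ_meas.dist hφ_meas)
    have hint_g : Integrable (U.indicator (fun _ => M ^ q)) ν :=
      (integrable_const _).indicator hUm
    have hint_h : Integrable (fun t => dist (ψ t) (φ t) ^ q) ν :=
      hint_g.mono' hmeas_h.aestronglyMeasurable (ae_of_all _ (fun t => by
        rw [Real.norm_eq_abs, abs_of_nonneg (hnn t)]
        exact hub t))
    have hint1 : ∫ t, dist (ψ t) (φ t) ^ q ∂ν ≤ ∫ t, U.indicator (fun _ => M ^ q) t ∂ν :=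
      integral_mono hint_h hint_g hub
    rw [integral_indicator_const _ hUm, smul_eq_mul, measureReal_def] at hint1
    have hIoc : ∀ k, k < m → ν (Ioc (a' k) (b' k)) = ENNReal.ofReal η := by
      intro k hk
      have hsplit : ν (Iic (a' k)) + ν (Ioc (a' k) (b' k)) = ν (Iic (b' k)) := by
        rw [← measure_union (Iic_disjoint_Ioc le_rfl) measurableSet_Ioc,
          Iic_union_Ioc_eq_Iic (hab' k hk).le]
      rw [hνIic k hk, hνIicb k hk, ENNReal.ofReal_add (hTpos k).le hη0.le] at hsplit
      exact (ENNReal.add_right_inj ENNReal.ofReal_ne_top).1 hsplit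
    have hνU : ν U ≤ ENNReal.ofReal ((m:ℝ) * η) := by
      refine (measure_biUnion_finset_le _ _).trans ?_
      have hstep : ∀ k ∈ Finset.range m, ν (Ioo (a' k) (b' k)) ≤ ENNReal.ofReal η := by
        intro k hk
        exact (measure_mono Ioo_subset_Ioc_self).trans (le_of_eq (hIoc k (Finset.mem_range.1 hk)))
      refine (Finset.sum_le_sum hstep).trans ?_
      rw [Finset.sum_const, Finset.card_range, nsmul_eq_mul,
        ENNReal.ofReal_mul (Nat.cast_nonneg m), ENNReal.ofReal_natCast]
    have hνUr : (ν U).toReal ≤ (m:ℝ) * η := by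
      have h1 := ENNReal.toReal_mono ENNReal.ofReal_ne_top hνU
      rwa [ENNReal.toReal_ofReal (by positivity)] at h1
    have h2 : η * ((m:ℝ) * M ^ q + 1) ≤ ε ^ q := by
      rw [← le_div_iff₀ hden]
      exact hηe
    have h3 : (ν U).toReal * M ^ q ≤ ((m:ℝ) * η) * M ^ q :=
      mul_le_mul_of_nonneg_right hνUr hMq.le
    show ∫ t, dist (ψ t) (φ t) ^ q ∂ν ≤ ε ^ q
    nlinarith [hη0.le, hint1]
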